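/- Let F be a finite field with q = |F| elements, and let n, D be naturals with D ≥ 1 and (2D+1)/n ≤ 1 − 1/q. Then there exist a natural m with m ≤ ⌈n·H_q((2D+1)/n)⌉ and a matrix M ∈ F^{m×n} such that every nonzero vector v in the kernel of M satisfies ‖v‖₀ ≥ 2D + 1 (and hence, for every real Δ > 1, M allows Δ-approximation of the sparsity of every vector of sparsity at most D from the linear measurements Mx, since Mx = My with ‖x‖₀, ‖y‖₀ ≤ D forces x = y). -/

import Mathlib

/-- The sparsity (number of nonzero entries) of a vector. -/
noncomputable def sparsity {F : Type*} [Zero F] {n : ℕ} (x : Fin n → F) : ℕ :=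
  Set.ncard {i | x i ≠ 0}

/-- The `q`-ary entropy function
`H_q(x) = x·log_q(q−1) − x·log_q(x) − (1−x)·log_q(1−x)`. -/
noncomputable def qaryEntropy (q : ℕ) (x : ℝ) : ℝ :=
  x * Real.logb q ((q : ℝ) - 1) - x * Real.logb q x - (1 - x) * Real.logb q (1 - x)

open Finset

section Aux

variable {F : Type*} [Field F] [Fintype F] [DecidableEq F] {n m : ℕ}

lemma GV.sparsity_eq (v : Fin n → F) :
    sparsity v = (univ.filter fun i => v i ≠ 0).card := by
  rw [sparsity, Set.ncard_eq_toFinset_card']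
  congr 1
  ext i
  simp

lemma GV.supp_card (s : Finset (Fin n)) :
    (univ.filter fun v : Fin n → F => (univ.filter fun i => v i ≠ 0) = s).card
      = (Fintype.card F - 1) ^ s.card := by
  have he : (univ.filter fun v : Fin n → F => (univ.filter fun i => v i ≠ 0) = s)
      = Fintype.piFinset (fun i => if i ∈ s then univ.erase 0 else {0}) := by
    ext v
    simp only [mem_filter, mem_univ, true_and, Fintype.mem_piFinset]
    constructor
    · intro hv i
      by_cases hi : i ∈ s <;> simp [hi]
      · have := Finset.ext_iff.1 hv i
        simp [hi] at this; exact this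
      · have := Finset.ext_iff.1 hv i
        simp [hi] at this; exact this
    · intro hv
      ext i
      have := hv i
      by_cases hi : i ∈ s <;> simp [hi] at this <;> simp [hi, this]
  rw [he, Fintype.card_piFinset]
  have : ∀ i : Fin n, #(if i ∈ s then (univ : Finset F).erase 0 else {0})
      = if i ∈ s then Fintype.card F - 1 else 1 := by
    intro i; by_cases hi : i ∈ s <;> simp [hi, Finset.card_erase_of_mem, Finset.card_univ]
  simp only [this]
  rw [Finset.prod_ite_mem, univ_inter, prod_const]

lemma GV.ball_card (t : ℕ) :
    (univ.filter fun v : Fin n → F => (univ.filter fun i => v i ≠ 0).card ≤ t).card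
      ≤ ∑ i ∈ range (t+1), n.choose i * (Fintype.card F - 1) ^ i := by
  have hsub : (univ.filter fun v : Fin n → F => (univ.filter fun i => v i ≠ 0).card ≤ t)
      ⊆ (range (t+1)).biUnion (fun i => (Finset.powersetCard i univ).biUnion
          (fun s => univ.filter fun v : Fin n → F => (univ.filter fun i => v i ≠ 0) = s)) := by
    intro v hv
    simp only [mem_filter, mem_univ, true_and] at hv
    refine mem_biUnion.2 ⟨(univ.filter fun i => v i ≠ 0).card, by simp [Nat.lt_succ_of_le hv], ?_⟩
    refine mem_biUnion.2 ⟨univ.filter fun i => v i ≠ 0, ?_, by simp⟩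
    simp [Finset.mem_powersetCard]
  calc _ ≤ _ := card_le_card hsub
    _ ≤ ∑ i ∈ range (t+1), ((Finset.powersetCard i univ).biUnion
          (fun s => univ.filter fun v : Fin n → F => (univ.filter fun i => v i ≠ 0) = s)).card :=
        card_biUnion_le
    _ ≤ ∑ i ∈ range (t+1), ∑ s ∈ Finset.powersetCard i (univ : Finset (Fin n)),
          (univ.filter fun v : Fin n → F => (univ.filter fun i => v i ≠ 0) = s).card :=
        Finset.sum_le_sum fun i _ => card_biUnion_le
    _ = ∑ i ∈ range (t+1), n.choose i * (Fintype.card F - 1) ^ i := by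
        refine Finset.sum_congr rfl fun i _ => ?_
        rw [Finset.sum_congr rfl fun s hs => GV.supp_card s]
        have : ∀ s ∈ Finset.powersetCard i (univ : Finset (Fin n)),
            (Fintype.card F - 1) ^ s.card = (Fintype.card F - 1) ^ i := by
          intro s hs; rw [(Finset.mem_powersetCard.1 hs).2]
        rw [Finset.sum_congr rfl this, sum_const, card_powersetCard, card_univ, Fintype.card_fin,
          smul_eq_mul]

lemma GV.orth_card (v : Fin n → F) (hv : v ≠ 0) :
    (univ.filter fun w : Fin n → F => ∑ j, w j * v j = 0).card ≤ Fintype.card F ^ (n - 1) := by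
  obtain ⟨i0, hi0⟩ : ∃ i, v i ≠ 0 := by
    by_contra hc; push_neg at hc; exact hv (funext hc)
  have htarget : (Fintype.piFinset (fun j : Fin n => if j = i0 then ({0} : Finset F) else univ)).card
      = Fintype.card F ^ (n - 1) := by
    rw [Fintype.card_piFinset]
    have : ∀ j : Fin n, #(if j = i0 then ({0} : Finset F) else univ)
        = if j = i0 then 1 else Fintype.card F := by
      intro j; by_cases hj : j = i0 <;> simp [hj, card_univ]
    simp only [this]
    rw [← Finset.mul_prod_erase univ _ (mem_univ i0), if_pos rfl, one_mul,
      Finset.prod_congr rfl (fun x hx => if_neg (Finset.ne_of_mem_erase hx)), prod_const,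
      card_erase_of_mem (mem_univ i0), card_univ, Fintype.card_fin]
  rw [← htarget]
  apply Finset.card_le_card_of_injOn (fun w => Function.update w i0 0)
  · intro w hw
    simp only [Finset.mem_coe, Fintype.mem_piFinset]
    intro j
    by_cases hj : j = i0 <;> simp [hj, Function.update]
  · intro w hw w' hw' hww
    simp only [coe_filter, mem_univ, Set.mem_setOf_eq, true_and] at hw hw'
    have heq : ∀ j, j ≠ i0 → w j = w' j := by
      intro j hj
      have := congrFun hww j
      simpa [Function.update, hj] using this
    have hsum : ∀ u : Fin n → F, ∑ j, u j * v j = u i0 * v i0 + ∑ j ∈ univ.erase i0, u j * v j := by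
      intro u; rw [← Finset.add_sum_erase _ _ (mem_univ i0)]
    have : w i0 * v i0 = w' i0 * v i0 := by
      have h1 := hsum w; have h2 := hsum w'
      rw [hw] at h1; rw [hw'] at h2
      have : ∑ j ∈ univ.erase i0, w j * v j = ∑ j ∈ univ.erase i0, w' j * v j :=
        Finset.sum_congr rfl fun j hj => by rw [heq j (Finset.ne_of_mem_erase hj)]
      linear_combination h2 - h1 - this
    have hio : w i0 = w' i0 := mul_right_cancel₀ hi0 this
    funext j
    by_cases hj : j = i0
    · rw [hj]; exact hio
    · exact heq j hj

lemma GV.mat_card (v : Fin n → F) (hv : v ≠ 0) :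
    (univ.filter fun M : Matrix (Fin m) (Fin n) F => M.mulVec v = 0).card
      ≤ Fintype.card F ^ ((n - 1) * m) := by
  set W : Finset (Fin n → F) := univ.filter fun w : Fin n → F => ∑ j, w j * v j = 0 with hW
  have hsub : (univ.filter fun M : Matrix (Fin m) (Fin n) F => M.mulVec v = 0)
      ⊆ (Fintype.piFinset (fun _ : Fin m => W) : Finset (Fin m → Fin n → F)) := by
    intro M hM
    simp only [mem_filter, mem_univ, true_and] at hM
    refine Fintype.mem_piFinset.2 ?_
    intro r
    rw [hW, mem_filter]
    refine ⟨mem_univ _, ?_⟩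
    have := congrFun hM r
    simpa [Matrix.mulVec, dotProduct, mul_comm] using this
  calc _ ≤ _ := card_le_card hsub
    _ = W.card ^ m := by exact (Fintype.card_piFinset (fun _ : Fin m => W)).trans (by simp)
    _ ≤ (Fintype.card F ^ (n - 1)) ^ m :=
        Nat.pow_le_pow_left (GV.orth_card v hv) m
    _ = Fintype.card F ^ ((n - 1) * m) := by rw [← pow_mul]

lemma GV.good_matrix (Bad : Finset (Fin n → F)) (hB : ∀ v ∈ Bad, v ≠ (0 : Fin n → F))
    (hcard : Bad.card * Fintype.card F ^ ((n - 1) * m) < Fintype.card F ^ (n * m)) :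
    ∃ M : Matrix (Fin m) (Fin n) F, ∀ v ∈ Bad, M.mulVec v ≠ 0 := by
  by_contra hc
  push_neg at hc
  have hsub : (univ : Finset (Matrix (Fin m) (Fin n) F))
      ⊆ Bad.biUnion (fun v => univ.filter fun M : Matrix (Fin m) (Fin n) F => M.mulVec v = 0) := by
    intro M _
    obtain ⟨v, hvB, hv0⟩ := hc M
    exact mem_biUnion.2 ⟨v, hvB, by simp [hv0]⟩
  have hle := card_le_card hsub
  rw [card_univ] at hle
  have hcu : Fintype.card (Matrix (Fin m) (Fin n) F) = Fintype.card F ^ (n * m) := by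
    rw [show Fintype.card (Matrix (Fin m) (Fin n) F) = Fintype.card (Fin m → Fin n → F) from rfl]
    simp [Fintype.card_fun, pow_mul]
  rw [hcu] at hle
  have h2 : (Bad.biUnion (fun v => univ.filter
        fun M : Matrix (Fin m) (Fin n) F => M.mulVec v = 0)).card
      ≤ Bad.card * Fintype.card F ^ ((n - 1) * m) := by
    calc _ ≤ ∑ v ∈ Bad, (univ.filter fun M : Matrix (Fin m) (Fin n) F => M.mulVec v = 0).card :=
        card_biUnion_le
      _ ≤ ∑ _v ∈ Bad, Fintype.card F ^ ((n - 1) * m) :=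
        Finset.sum_le_sum fun v hv => GV.mat_card v (hB v hv)
      _ = _ := by rw [sum_const, smul_eq_mul]
  omega

end Aux

lemma GV.entropy_bound (q n k : ℕ) (hq : 2 ≤ q) (hn : 1 ≤ n) (hk : 1 ≤ k)
    (hδ : (k : ℝ) / n ≤ 1 - 1 / q) :
    (∑ i ∈ range (k + 1), (n.choose i * (q - 1) ^ i : ℕ) : ℝ)
      ≤ (q : ℝ) ^ ((n : ℝ) * qaryEntropy q ((k : ℝ) / n)) := by
  have hq0 : (0 : ℝ) < q := by positivity
  have hq1 : (1 : ℝ) < q := by exact_mod_cast hq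
  have hqm1 : (0 : ℝ) < (q : ℝ) - 1 := by linarith
  have hn0 : (0 : ℝ) < n := by exact_mod_cast hn
  set δ : ℝ := (k : ℝ) / n with hδdef
  have hδ0 : 0 < δ := by positivity
  have hδ1 : δ < 1 := lt_of_le_of_lt hδ (by
    have : 0 < 1 / (q : ℝ) := by positivity
    linarith)
  have h1δ : 0 < 1 - δ := by linarith
  have hknR : (k : ℝ) < n := by
    have := (div_lt_one hn0).1 hδ1
    exact this
  have hkn : k < n := by exact_mod_cast hknR
  have hnδ : (n : ℝ) * δ = k := by rw [hδdef]; field_simp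
  have hnδ' : (n : ℝ) * (1 - δ) = ((n - k : ℕ) : ℝ) := by
    rw [Nat.cast_sub hkn.le, hδdef]; field_simp
  have hlogpow : ∀ (x : ℝ) (j : ℕ), 0 < x →
      (q : ℝ) ^ ((j : ℝ) * Real.logb q x) = x ^ j := by
    intro x j hx
    rw [mul_comm, Real.rpow_mul hq0.le, Real.rpow_logb hq0 (by linarith) hx,
      Real.rpow_natCast]
  have key : (q : ℝ) ^ ((n : ℝ) * qaryEntropy q δ) * (δ ^ k * (1 - δ) ^ (n - k))
      = ((q : ℝ) - 1) ^ k := by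
    have hexp : (n : ℝ) * qaryEntropy q δ
        = (k : ℝ) * Real.logb q ((q : ℝ) - 1) + (-((k : ℝ) * Real.logb q δ))
          + (-(((n - k : ℕ) : ℝ) * Real.logb q (1 - δ))) := by
      rw [qaryEntropy, ← hnδ, ← hnδ']; ring
    rw [hexp, Real.rpow_add hq0, Real.rpow_add hq0, Real.rpow_neg hq0.le,
      Real.rpow_neg hq0.le, hlogpow _ _ hqm1, hlogpow _ _ hδ0, hlogpow _ _ h1δ]
    field_simp
  have hstep : δ ≤ (1 - δ) * ((q : ℝ) - 1) := by
    have h2 : δ * q ≤ q - 1 := by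
      have := mul_le_mul_of_nonneg_right hδ hq0.le
      calc δ * q ≤ (1 - 1 / q) * q := this
        _ = q - 1 := by field_simp
    nlinarith
  have term : ∀ i ∈ range (k + 1),
      (n.choose i : ℝ) * ((q : ℝ) - 1) ^ i * (δ ^ k * (1 - δ) ^ (n - k))
        ≤ (n.choose i : ℝ) * (δ ^ i * (1 - δ) ^ (n - i)) * ((q : ℝ) - 1) ^ k := by
    intro i hi
    have hik : i ≤ k := Nat.lt_succ_iff.1 (mem_range.1 hi)
    set j := k - i with hj
    have hk' : k = i + j := by omega
    have hn' : n - i = (n - k) + j := by omega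
    have P : δ ^ j ≤ ((1 - δ) * ((q : ℝ) - 1)) ^ j := pow_le_pow_left₀ hδ0.le hstep j
    have core : ((q : ℝ) - 1) ^ i * (δ ^ k * (1 - δ) ^ (n - k))
        ≤ (δ ^ i * (1 - δ) ^ (n - i)) * ((q : ℝ) - 1) ^ k := by
      calc ((q : ℝ) - 1) ^ i * (δ ^ k * (1 - δ) ^ (n - k))
          = (((q : ℝ) - 1) ^ i * δ ^ i * (1 - δ) ^ (n - k)) * δ ^ j := by
            rw [show δ ^ k = δ ^ (i + j) from by rw [← hk'], pow_add]; ring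
        _ ≤ (((q : ℝ) - 1) ^ i * δ ^ i * (1 - δ) ^ (n - k)) * ((1 - δ) * ((q : ℝ) - 1)) ^ j := by
            apply mul_le_mul_of_nonneg_left P (by positivity)
        _ = (δ ^ i * (1 - δ) ^ (n - i)) * ((q : ℝ) - 1) ^ k := by
            rw [show ((q : ℝ) - 1) ^ k = ((q : ℝ) - 1) ^ (i + j) from by rw [← hk'],
              hn', pow_add, pow_add, mul_pow]; ring
    calc (n.choose i : ℝ) * ((q : ℝ) - 1) ^ i * (δ ^ k * (1 - δ) ^ (n - k))
        = (n.choose i : ℝ) * (((q : ℝ) - 1) ^ i * (δ ^ k * (1 - δ) ^ (n - k))) := by ring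
      _ ≤ (n.choose i : ℝ) * ((δ ^ i * (1 - δ) ^ (n - i)) * ((q : ℝ) - 1) ^ k) :=
          mul_le_mul_of_nonneg_left core (by positivity)
      _ = _ := by ring
  have binom : ∑ i ∈ range (n + 1), (δ ^ i * (1 - δ) ^ (n - i) * (n.choose i : ℝ)) = 1 := by
    have := add_pow δ (1 - δ) n
    rw [show δ + (1 - δ) = 1 by ring, one_pow] at this
    exact this.symm
  have sum_le : ∑ i ∈ range (k + 1), (n.choose i : ℝ) * (δ ^ i * (1 - δ) ^ (n - i))
      ≤ 1 := by
    calc ∑ i ∈ range (k + 1), (n.choose i : ℝ) * (δ ^ i * (1 - δ) ^ (n - i))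
        = ∑ i ∈ range (k + 1), (δ ^ i * (1 - δ) ^ (n - i) * (n.choose i : ℝ)) :=
          Finset.sum_congr rfl fun i _ => by ring
      _ ≤ ∑ i ∈ range (n + 1), (δ ^ i * (1 - δ) ^ (n - i) * (n.choose i : ℝ)) := by
          apply Finset.sum_le_sum_of_subset_of_nonneg
          · exact Finset.range_subset_range.2 (by omega)
          · intro i _ _; positivity
      _ = 1 := binom
  have main : (∑ i ∈ range (k + 1), ((n.choose i : ℝ) * ((q : ℝ) - 1) ^ i))
        * (δ ^ k * (1 - δ) ^ (n - k))
      ≤ (q : ℝ) ^ ((n : ℝ) * qaryEntropy q δ) * (δ ^ k * (1 - δ) ^ (n - k)) := by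
    rw [key, Finset.sum_mul]
    calc ∑ i ∈ range (k + 1), (n.choose i : ℝ) * ((q : ℝ) - 1) ^ i * (δ ^ k * (1 - δ) ^ (n - k))
        ≤ ∑ i ∈ range (k + 1), (n.choose i : ℝ) * (δ ^ i * (1 - δ) ^ (n - i)) * ((q : ℝ) - 1) ^ k :=
          Finset.sum_le_sum term
      _ = (∑ i ∈ range (k + 1), (n.choose i : ℝ) * (δ ^ i * (1 - δ) ^ (n - i)))
            * ((q : ℝ) - 1) ^ k := by rw [Finset.sum_mul]
      _ ≤ 1 * ((q : ℝ) - 1) ^ k := by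
          apply mul_le_mul_of_nonneg_right sum_le (by positivity)
      _ = ((q : ℝ) - 1) ^ k := one_mul _
  have hpos : 0 < δ ^ k * (1 - δ) ^ (n - k) := by positivity
  have hfin := le_of_mul_le_mul_right main hpos
  calc (∑ i ∈ range (k + 1), (n.choose i * (q - 1) ^ i : ℕ) : ℝ)
      = ∑ i ∈ range (k + 1), ((n.choose i : ℝ) * ((q : ℝ) - 1) ^ i) := by
        push_cast [Nat.cast_sub (by omega : 1 ≤ q)]
        ring_nf
    _ ≤ _ := hfin

lemma GV.arith (n m : ℕ) (hn : 1 ≤ n) : m + (n - 1) * m = n * m := by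
  have h1 := Nat.sub_one_mul n m
  have h2 : m ≤ n * m := Nat.le_mul_of_pos_left m (by omega)
  omega

theorem gv_bound_matrix (F : Type*) [Field F] [Fintype F] (n D : ℕ) (hD : 1 ≤ D)
    (h : ((2 * D + 1 : ℕ) : ℝ) / (n : ℝ) ≤ 1 - 1 / (Fintype.card F : ℝ)) :
    ∃ m : ℕ, m ≤ ⌈(n : ℝ) * qaryEntropy (Fintype.card F) (((2 * D + 1 : ℕ) : ℝ) / (n : ℝ))⌉₊ ∧
      ∃ M : Matrix (Fin m) (Fin n) F,
        (∀ v : Fin n → F, M.mulVec v = 0 → v ≠ 0 → 2 * D + 1 ≤ sparsity v) ∧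
        (∀ x y : Fin n → F, sparsity x ≤ D → sparsity y ≤ D →
          M.mulVec x = M.mulVec y → x = y) := by
  classical
  set q := Fintype.card F with hqdef
  have hq : 2 ≤ q := Fintype.one_lt_card
  -- helper: sparsity of a difference
  have sp_sub : ∀ x y : Fin n → F, sparsity (x - y) ≤ sparsity x + sparsity y := by
    intro x y
    have hsub : {i | (x - y) i ≠ 0} ⊆ {i | x i ≠ 0} ∪ {i | y i ≠ 0} := by
      intro i hi
      by_contra hc
      simp only [Set.mem_union, Set.mem_setOf_eq, not_or, not_not] at hc
      simp only [Set.mem_setOf_eq, Pi.sub_apply, hc.1, hc.2, sub_zero] at hi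
      exact hi rfl
    calc sparsity (x - y) ≤ Set.ncard ({i | x i ≠ 0} ∪ {i | y i ≠ 0}) :=
        Set.ncard_le_ncard hsub (Set.toFinite _)
      _ ≤ _ := Set.ncard_union_le _ _
  by_cases hn : n = 0
  · subst hn
    refine ⟨0, Nat.zero_le _, 0, ?_, ?_⟩
    · intro v _ hv0
      exact absurd (funext fun i => i.elim0) hv0
    · intro x y _ _ _
      exact funext fun i => i.elim0
  · have hn1 : 1 ≤ n := Nat.one_le_iff_ne_zero.2 hn
    refine ⟨⌈(n : ℝ) * qaryEntropy q (((2 * D + 1 : ℕ) : ℝ) / (n : ℝ))⌉₊, le_refl _, ?_⟩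
    set m := ⌈(n : ℝ) * qaryEntropy q (((2 * D + 1 : ℕ) : ℝ) / (n : ℝ))⌉₊ with hmdef
    clear_value m
    obtain ⟨Bad, hBdef⟩ : ∃ B : Finset (Fin n → F),
        B = univ.filter (fun v : Fin n → F => v ≠ 0 ∧ (univ.filter fun i => v i ≠ 0).card ≤ 2 * D) :=
      ⟨_, rfl⟩
    have hB0 : (0 : Fin n → F) ∉ Bad := by simp [hBdef]
    have hBmem : ∀ v : Fin n → F, v ∈ Bad ↔ v ≠ 0 ∧ (univ.filter fun i => v i ≠ 0).card ≤ 2 * D := by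
      intro v; rw [hBdef, mem_filter]; simp
    have hBne : ∀ v ∈ Bad, v ≠ (0 : Fin n → F) := by
      intro v hv; exact ((hBmem v).1 hv).1
    -- cardinality bound on Bad
    have hBadlt : Bad.card < q ^ m := by
      have hins : insert (0 : Fin n → F) Bad
          ⊆ univ.filter fun v : Fin n → F => (univ.filter fun i => v i ≠ 0).card ≤ 2 * D := by
        intro v hv
        rcases Finset.mem_insert.1 hv with rfl | hv
        · simp
        · exact mem_filter.2 ⟨mem_univ _, ((hBmem v).1 hv).2⟩
      have h1 : Bad.card + 1 ≤
          (univ.filter fun v : Fin n → F => (univ.filter fun i => v i ≠ 0).card ≤ 2 * D).card := by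
        have := card_le_card hins
        rw [Finset.card_insert_of_notMem hB0] at this
        exact this
      have h2 := GV.ball_card (F := F) (n := n) (2 * D)
      have h3 : (∑ i ∈ range (2 * D + 1), n.choose i * (q - 1) ^ i)
          ≤ ∑ i ∈ range (2 * D + 1 + 1), n.choose i * (q - 1) ^ i :=
        Finset.sum_le_sum_of_subset (Finset.range_subset_range.2 (Nat.le_succ _))
      have h4 := GV.entropy_bound q n (2 * D + 1) hq hn1 (Nat.succ_le_succ (Nat.zero_le _)) h
      have h5 : (q : ℝ) ^ ((n : ℝ) * qaryEntropy q (((2 * D + 1 : ℕ) : ℝ) / (n : ℝ)))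
          ≤ ((q ^ m : ℕ) : ℝ) := by
        have h50 := Real.rpow_le_rpow_of_exponent_le
          (show (1 : ℝ) ≤ q by exact_mod_cast hq.trans' (by norm_num))
          (Nat.le_ceil ((n : ℝ) * qaryEntropy q (((2 * D + 1 : ℕ) : ℝ) / (n : ℝ))))
        rw [Real.rpow_natCast, ← hmdef] at h50
        calc (q : ℝ) ^ ((n : ℝ) * qaryEntropy q (((2 * D + 1 : ℕ) : ℝ) / (n : ℝ)))
            ≤ (q : ℝ) ^ m := h50
          _ = ((q ^ m : ℕ) : ℝ) := by rw [Nat.cast_pow]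
      have hchain : ((Bad.card + 1 : ℕ) : ℝ) ≤ ((q ^ m : ℕ) : ℝ) := by
        calc ((Bad.card + 1 : ℕ) : ℝ)
            ≤ ((∑ i ∈ range (2 * D + 1 + 1), n.choose i * (q - 1) ^ i : ℕ) : ℝ) := by
              exact_mod_cast le_trans h1 (le_trans h2 h3)
          _ = (∑ i ∈ range (2 * D + 1 + 1), (n.choose i * (q - 1) ^ i : ℕ) : ℝ) := by
              push_cast; ring
          _ ≤ (q : ℝ) ^ ((n : ℝ) * qaryEntropy q (((2 * D + 1 : ℕ) : ℝ) / (n : ℝ))) := h4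
          _ ≤ _ := h5
      have : Bad.card + 1 ≤ q ^ m := by
        have := Nat.cast_le (α := ℝ) (m := Bad.card + 1) (n := q ^ m)
        exact this.1 hchain
      exact Nat.lt_of_succ_le this
    -- existence of a good matrix
    have hq0 : 0 < q := Nat.lt_of_lt_of_le (by norm_num) hq
    have hmul : Bad.card * q ^ ((n - 1) * m) < q ^ (n * m) := by
      have hpowpos : 0 < q ^ ((n - 1) * m) := pow_pos hq0 _
      have hlt := Nat.mul_lt_mul_of_lt_of_le hBadlt (le_refl (q ^ ((n - 1) * m))) hpowpos
      have heq : q ^ m * q ^ ((n - 1) * m) = q ^ (n * m) := by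
        rw [← pow_add]
        congr 1
        exact GV.arith n m hn1
      exact lt_of_lt_of_eq hlt heq
    obtain ⟨M, hM⟩ := GV.good_matrix (m := m) Bad hBne hmul
    refine ⟨M, ?_, ?_⟩
    · intro v hMv hv0
      by_contra hc
      push_neg at hc
      have hsp : (univ.filter fun i => v i ≠ 0).card ≤ 2 * D := by
        rw [← GV.sparsity_eq]; omega
      exact hM v ((hBmem v).2 ⟨hv0, hsp⟩) hMv
    · intro x y hx hy hxy
      by_contra hne
      have hv0 : x - y ≠ 0 := sub_ne_zero.2 hne
      have hMv : M.mulVec (x - y) = 0 := by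
        rw [Matrix.mulVec_sub, hxy, sub_self]
      have hsp : sparsity (x - y) ≤ 2 * D := by
        have := sp_sub x y
        omega
      have hspc : (univ.filter fun i => (x - y) i ≠ 0).card ≤ 2 * D := by
        rw [← GV.sparsity_eq]; exact hsp
      exact hM (x - y) ((hBmem (x - y)).2 ⟨hv0, hspc⟩) hMv
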